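/- Under Independence, Monotonicity, Relevance, Wave ignorability, and absorbing treatment, the w̄ × w̄ lower-triangular matrix Π with entries Π_{w,t} = π_{w,t} for t ≤ w and Π_{w,t} = 0 for t > w is invertible (its diagonal entries all equal π_{1,1} > 0), and the vector λ = (λ_1, ..., λ_{w̄}) of incremental complier effects is the unique solution of the linear system ρ = Π λ, i.e., λ = Π⁻¹ ρ where ρ = (ρ_1, ..., ρ_{w̄}). -/

import Mathlib

open MeasureTheory ProbabilityTheory Finset

/-- Conditional mean `E[X | A]`: the expectation of `X` under `P` conditioned on the event `A`. -/
noncomputable def cmean {Ω : Type*} [MeasurableSpace Ω] (P : MeasureTheory.Measure Ω)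
    (A : Set Ω) (X : Ω → ℝ) : ℝ :=
  ∫ ω, X ω ∂(P[|A])

section Aux
set_option linter.unusedSectionVars false
variable {Ω : Type*} [MeasurableSpace Ω] (P : Measure Ω) [IsProbabilityMeasure P]

lemma cmean_eq (A : Set Ω) (X : Ω → ℝ) :
    cmean P A X = (P A).toReal⁻¹ * ∫ ω in A, X ω ∂P := by
  have : P[|A] = (P A)⁻¹ • P.restrict A := rfl
  rw [cmean, this, integral_smul_measure, ENNReal.toReal_inv, smul_eq_mul]

lemma cmean_congr {A : Set Ω} (hA : MeasurableSet A) {f g : Ω → ℝ}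
    (h : ∀ ω ∈ A, f ω = g ω) : cmean P A f = cmean P A g := by
  rw [cmean_eq, cmean_eq]
  congr 1
  exact setIntegral_congr_fun hA h

lemma setIntegral_eq_cmean {A : Set Ω} (hA0 : P A ≠ 0) (X : Ω → ℝ) :
    ∫ ω in A, X ω ∂P = (P A).toReal * cmean P A X := by
  rw [cmean_eq]
  have hne : (P A).toReal ≠ 0 :=
    ENNReal.toReal_ne_zero.mpr ⟨hA0, measure_ne_top P A⟩
  field_simp

lemma cmean_of_indepFun (Z : Ω → ℕ) (hZ : Measurable Z) {X : Ω → ℝ}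
    (hX : Integrable X P) (hind : IndepFun X Z P) (c : ℕ)
    (hc : P {ω | Z ω = c} ≠ 0) :
    cmean P {ω | Z ω = c} X = ∫ ω, X ω ∂P := by
  set A : Set Ω := {ω | Z ω = c} with hAdef
  have hA : MeasurableSet A := hZ (measurableSet_singleton c)
  have hne : (P A).toReal ≠ 0 := ENNReal.toReal_ne_zero.mpr ⟨hc, measure_ne_top P A⟩
  have hIf : IndepFun X (fun ω => if Z ω = c then (1:ℝ) else 0) P := by
    have : (fun ω => if Z ω = c then (1:ℝ) else 0)
        = (fun n : ℕ => if n = c then (1:ℝ) else 0) ∘ Z := rfl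
    rw [this]
    have := hind.comp (measurable_id (α := ℝ))
      (measurable_of_countable (fun n : ℕ => if n = c then (1:ℝ) else 0))
    simpa using this
  have hind_int : Integrable (fun ω => if Z ω = c then (1:ℝ) else 0) P := by
    have : (fun ω => if Z ω = c then (1:ℝ) else 0) = A.indicator (fun _ => (1:ℝ)) := by
      ext ω; simp [Set.indicator_apply, hAdef]
    rw [this]
    exact (integrable_const (1:ℝ)).indicator hA
  have hmul := hIf.integral_mul_eq_mul_integral hX.aestronglyMeasurable hind_int.aestronglyMeasurable
  have hindic : ∫ ω, (if Z ω = c then (1:ℝ) else 0) ∂P = (P A).toReal := by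
    have : (fun ω => if Z ω = c then (1:ℝ) else 0) = A.indicator (fun _ => (1:ℝ)) := by
      ext ω; simp [Set.indicator_apply, hAdef]
    rw [this, integral_indicator_const _ hA]; simp [measureReal_def]
  have key : ∫ ω in A, X ω ∂P = (∫ ω, X ω ∂P) * (P A).toReal := by
    rw [← integral_indicator hA]
    have h1 : A.indicator X = fun ω => X ω * (if Z ω = c then (1:ℝ) else 0) := by
      ext ω; simp [Set.indicator_apply, hAdef, mul_ite]
    rw [h1]
    have h2 : (fun ω => X ω * (if Z ω = c then (1:ℝ) else 0))
        = X * (fun ω => if Z ω = c then (1:ℝ) else 0) := rfl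
    rw [h2, hmul, hindic]
  rw [cmean_eq, key]
  field_simp

lemma telescope_Ioc (f : ℕ → ℝ) (a b : ℕ) (hab : a ≤ b) :
    ∑ t ∈ Finset.Ioc a b, (f t - f (t - 1)) = f b - f a := by
  induction b, hab using Nat.le_induction with
  | base => simp
  | succ b hb ih =>
    rw [Finset.sum_Ioc_succ_top (by omega), ih]
    simp

lemma sum_ind_telescope (f : ℕ → ℝ) (w a b : ℕ) (hab : a ≤ b) (hbw : b ≤ w) :
    ∑ t ∈ Finset.Icc 1 w, (if a < t ∧ t ≤ b then f t - f (t - 1) else 0)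
      = f b - f a := by
  rw [← telescope_Ioc f a b hab]
  rw [Finset.sum_ite, Finset.sum_const_zero, add_zero]
  congr 1
  ext t
  simp only [Finset.mem_filter, Finset.mem_Icc, Finset.mem_Ioc]
  omega

lemma sum_Icc_one_eq_sum_range (g : ℕ → ℝ) (n : ℕ) :
    ∑ t ∈ Finset.Icc 1 n, g t = ∑ s ∈ Finset.range n, g (s + 1) := by
  induction n with
  | zero => simp
  | succ n ih =>
    rw [Finset.sum_range_succ, ← ih, Finset.sum_Icc_succ_top (by omega)]

end Aux
theorem triangular_system_invertible
    {Ω : Type*} [MeasurableSpace Ω] (P : MeasureTheory.Measure Ω) [IsProbabilityMeasure P]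
    (Z : Ω → ℕ) (hZmeas : Measurable Z) (hZbin : ∀ ω, Z ω ≤ 1)
    (hZpos : 0 < P {ω | Z ω = 1}) (hZlt : P {ω | Z ω = 1} < 1)
    (wbar : ℕ) (hwbar : 1 ≤ wbar)
    (T : ℕ → ℕ → Ω → ℕ) (hTmeas : ∀ w z, Measurable (T w z))
    (hTrange : ∀ w ∈ Set.Icc 1 wbar, ∀ z ≤ 1, ∀ ω, T w z ω ≤ w)
    (Y : ℕ → ℕ → Ω → ℝ) (hYmeas : ∀ w t, Measurable (Y w t))
    (hYint : ∀ w ∈ Set.Icc 1 wbar, ∀ t ≤ w, MeasureTheory.Integrable (Y w t) P)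
    (hAbs : ∀ z ≤ 1, ∀ w, 1 ≤ w → w < wbar → ∀ ω,
      (1 ≤ T w z ω → T (w + 1) z ω = T w z ω + 1) ∧
      (T w z ω = 0 → T (w + 1) z ω ≤ 1))
    (hIndep : ∀ w ∈ Set.Icc 1 wbar,
      IndepFun (fun ω => ((fun t : ℕ => Y w t ω), T w 1 ω, T w 0 ω)) Z P)
    (hMono : ∀ w ∈ Set.Icc 1 wbar, ∀ᵐ ω ∂P, T w 0 ω ≤ T w 1 ω)
    (hRel : cmean P {ω | Z ω = 0} (fun ω => (T 1 (Z ω) ω : ℝ))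
          < cmean P {ω | Z ω = 1} (fun ω => (T 1 (Z ω) ω : ℝ)))
    (lam : ℕ → ℝ)
    (hWI : ∀ v w t, 1 ≤ t → t ≤ v → v ≤ w → w ≤ wbar →
      0 < P {ω | T w 0 ω < t ∧ t ≤ T w 1 ω} →
      0 < P {ω | T v 0 ω < t ∧ t ≤ T v 1 ω} →
      cmean P {ω | T w 0 ω < t ∧ t ≤ T w 1 ω} (fun ω => Y w t ω - Y w (t - 1) ω) = lam t ∧
      cmean P {ω | T v 0 ω < t ∧ t ≤ T v 1 ω} (fun ω => Y v t ω - Y v (t - 1) ω) = lam t)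
    (M : Matrix (Fin wbar) (Fin wbar) ℝ)
    (hM : ∀ i j : Fin wbar, M i j =
      if (j : ℕ) ≤ (i : ℕ)
      then (P {ω | T ((i : ℕ) + 1) 0 ω < (j : ℕ) + 1 ∧ (j : ℕ) + 1 ≤ T ((i : ℕ) + 1) 1 ω}).toReal
      else 0)
    (rho : Fin wbar → ℝ)
    (hrho : ∀ i : Fin wbar, rho i =
      cmean P {ω | Z ω = 1} (fun ω => Y ((i : ℕ) + 1) (T ((i : ℕ) + 1) (Z ω) ω) ω)
        - cmean P {ω | Z ω = 0} (fun ω => Y ((i : ℕ) + 1) (T ((i : ℕ) + 1) (Z ω) ω) ω))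
    (lv : Fin wbar → ℝ) (hlv : ∀ i : Fin wbar, lv i = lam ((i : ℕ) + 1)) :
    (∀ i : Fin wbar, M i i = (P {ω | T 1 0 ω < 1 ∧ 1 ≤ T 1 1 ω}).toReal) ∧
    0 < P {ω | T 1 0 ω < 1 ∧ 1 ≤ T 1 1 ω} ∧
    IsUnit M ∧
    M.mulVec lv = rho ∧
    lv = M⁻¹.mulVec rho ∧
    (∀ x : Fin wbar → ℝ, M.mulVec x = rho → x = lv) := by
  classical
  -- basic measurability
  have hZ1meas : MeasurableSet {ω | Z ω = 1} := hZmeas (measurableSet_singleton 1)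
  have hZ0meas : MeasurableSet {ω | Z ω = 0} := hZmeas (measurableSet_singleton 0)
  have hZ0set : {ω | Z ω = 0} = {ω | Z ω = 1}ᶜ := by
    ext ω; have := hZbin ω; simp only [Set.mem_setOf_eq, Set.mem_compl_iff]; omega
  have hZ0pos : P {ω | Z ω = 0} ≠ 0 := by
    rw [hZ0set, prob_compl_eq_one_sub hZ1meas]
    intro h
    exact absurd (tsub_eq_zero_iff_le.mp h) (not_le.mpr hZlt)
  -- exposure structure from absorbing treatment
  have pos1 : ∀ z ≤ 1, ∀ ω, 1 ≤ T 1 z ω → ∀ w, 1 ≤ w → w ≤ wbar → T w z ω = w := by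
    intro z hz ω h1 w hw1
    induction w, hw1 using Nat.le_induction with
    | base => intro _; have h := hTrange 1 ⟨le_rfl, hwbar⟩ z hz ω; omega
    | succ n hn ih =>
      intro hsw
      have hTn : T n z ω = n := ih (by omega)
      have := (hAbs z hz n hn (by omega) ω).1 (by omega)
      omega
  have zer1 : ∀ z ≤ 1, ∀ ω, T 1 z ω = 0 → ∀ w, 1 ≤ w → w ≤ wbar → T w z ω < w := by
    intro z hz ω h0 w hw1
    induction w, hw1 using Nat.le_induction with
    | base => intro _; omega
    | succ n hn ih =>
      intro hsw
      have hTn : T n z ω < n := ih (by omega)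
      have h := hAbs z hz n hn (by omega) ω
      by_cases hc : T n z ω = 0
      · have := h.2 hc; omega
      · have := h.1 (by omega); omega
  have hsetEq : ∀ w, 1 ≤ w → w ≤ wbar →
      {ω | T w 0 ω < w ∧ w ≤ T w 1 ω} = {ω | T 1 0 ω < 1 ∧ 1 ≤ T 1 1 ω} := by
    intro w hw1 hw2
    ext ω
    simp only [Set.mem_setOf_eq]
    constructor
    · rintro ⟨h0, h1⟩
      constructor
      · by_contra hc
        have := pos1 0 (by omega) ω (by omega) w hw1 hw2
        omega
      · by_contra hc
        have := zer1 1 le_rfl ω (by omega) w hw1 hw2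
        omega
    · rintro ⟨h0, h1⟩
      have e1 : T w 1 ω = w := pos1 1 le_rfl ω h1 w hw1 hw2
      have e0 : T w 0 ω < w := zer1 0 (by omega) ω (by omega) w hw1 hw2
      omega
  -- independence pushforward helper
  have hIndepComp : ∀ w ∈ Set.Icc 1 wbar, ∀ g : ((ℕ → ℝ) × ℕ × ℕ) → ℝ, Measurable g →
      IndepFun (fun ω => g ((fun t : ℕ => Y w t ω), T w 1 ω, T w 0 ω)) Z P := by
    intro w hw g hg
    have := (hIndep w hw).comp hg (measurable_id (α := ℕ))
    exact this
  -- reading the observed outcome as a finite sum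
  have hYobs_eq : ∀ w z, ∀ ω, T w z ω ≤ w →
      Y w (T w z ω) ω = ∑ t ∈ Finset.range (w + 1), if T w z ω = t then Y w t ω else 0 := by
    intro w z ω hle
    rw [Finset.sum_ite_eq (Finset.range (w + 1)) (T w z ω) (fun t => Y w t ω)]
    simp [Finset.mem_range, Nat.lt_succ_iff, hle]
  have hgmeas : ∀ (w : ℕ) (pr : ((ℕ → ℝ) × ℕ × ℕ) → ℕ), Measurable pr →
      Measurable (fun p : ((ℕ → ℝ) × ℕ × ℕ) =>
        ∑ t ∈ Finset.range (w + 1), if pr p = t then p.1 t else 0) := by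
    intro w pr hpr
    apply Finset.measurable_sum
    intro t _
    exact Measurable.ite (hpr (measurableSet_singleton t))
      ((measurable_pi_apply t).comp measurable_fst) measurable_const
  -- the key identification identity, wave by wave
  have key : ∀ w, 1 ≤ w → w ≤ wbar →
      cmean P {ω | Z ω = 1} (fun ω => Y w (T w (Z ω) ω) ω)
        - cmean P {ω | Z ω = 0} (fun ω => Y w (T w (Z ω) ω) ω)
      = ∑ t ∈ Finset.Icc 1 w, (P {ω | T w 0 ω < t ∧ t ≤ T w 1 ω}).toReal * lam t := by
    intro w hw1 hw2
    have hwIcc : w ∈ Set.Icc 1 wbar := ⟨hw1, hw2⟩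
    have hT1le : ∀ ω, T w 1 ω ≤ w := hTrange w hwIcc 1 le_rfl
    have hT0le : ∀ ω, T w 0 ω ≤ w := hTrange w hwIcc 0 (by omega)
    have hIntObs : ∀ z ≤ 1, Integrable (fun ω => Y w (T w z ω) ω) P := by
      intro z hz
      have heq : (fun ω => Y w (T w z ω) ω)
          = fun ω => ∑ t ∈ Finset.range (w + 1), if T w z ω = t then Y w t ω else 0 := by
        funext ω; exact hYobs_eq w z ω (hTrange w hwIcc z hz ω)
      rw [heq]
      apply integrable_finset_sum
      intro t ht
      have h2 : (fun ω => if T w z ω = t then Y w t ω else 0)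
          = Set.indicator {ω | T w z ω = t} (Y w t) := by
        ext ω; simp [Set.indicator_apply]
      rw [h2]
      have ht' : t ≤ w := by simp only [Finset.mem_range] at ht; omega
      exact (hYint w hwIcc t ht').indicator ((hTmeas w z) (measurableSet_singleton t))
    have hIndObs1 : IndepFun (fun ω => Y w (T w 1 ω) ω) Z P := by
      have hg := hgmeas w (fun p => p.2.1) (measurable_fst.comp measurable_snd)
      have heq : (fun ω => Y w (T w 1 ω) ω)
          = fun ω => (fun p : ((ℕ → ℝ) × ℕ × ℕ) =>
              ∑ t ∈ Finset.range (w + 1), if p.2.1 = t then p.1 t else 0)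
            ((fun t : ℕ => Y w t ω), T w 1 ω, T w 0 ω) := by
        funext ω; exact hYobs_eq w 1 ω (hT1le ω)
      rw [heq]
      exact hIndepComp w hwIcc _ hg
    have hIndObs0 : IndepFun (fun ω => Y w (T w 0 ω) ω) Z P := by
      have hg := hgmeas w (fun p => p.2.2) (measurable_snd.comp measurable_snd)
      have heq : (fun ω => Y w (T w 0 ω) ω)
          = fun ω => (fun p : ((ℕ → ℝ) × ℕ × ℕ) =>
              ∑ t ∈ Finset.range (w + 1), if p.2.2 = t then p.1 t else 0)
            ((fun t : ℕ => Y w t ω), T w 1 ω, T w 0 ω) := by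
        funext ω; exact hYobs_eq w 0 ω (hT0le ω)
      rw [heq]
      exact hIndepComp w hwIcc _ hg
    have hc1 : cmean P {ω | Z ω = 1} (fun ω => Y w (T w (Z ω) ω) ω)
        = ∫ ω, Y w (T w 1 ω) ω ∂P := by
      rw [cmean_congr P hZ1meas (g := fun ω => Y w (T w 1 ω) ω)
        (fun ω hω => by simp only [Set.mem_setOf_eq] at hω; rw [hω])]
      exact cmean_of_indepFun P Z hZmeas (hIntObs 1 le_rfl) hIndObs1 1 (ne_of_gt hZpos)
    have hc0 : cmean P {ω | Z ω = 0} (fun ω => Y w (T w (Z ω) ω) ω)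
        = ∫ ω, Y w (T w 0 ω) ω ∂P := by
      rw [cmean_congr P hZ0meas (g := fun ω => Y w (T w 0 ω) ω)
        (fun ω hω => by simp only [Set.mem_setOf_eq] at hω; rw [hω])]
      exact cmean_of_indepFun P Z hZmeas (hIntObs 0 (by omega)) hIndObs0 0 hZ0pos
    rw [hc1, hc0, ← integral_sub (hIntObs 1 le_rfl) (hIntObs 0 (by omega))]
    have hae : (fun ω => Y w (T w 1 ω) ω - Y w (T w 0 ω) ω)
        =ᵐ[P] fun ω => ∑ t ∈ Finset.Icc 1 w,
          (if T w 0 ω < t ∧ t ≤ T w 1 ω then Y w t ω - Y w (t - 1) ω else 0) := by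
      filter_upwards [hMono w hwIcc] with ω hm
      exact (sum_ind_telescope (fun t => Y w t ω) w (T w 0 ω) (T w 1 ω) hm (hT1le ω)).symm
    rw [integral_congr_ae hae]
    have hBms : ∀ t, MeasurableSet {ω | T w 0 ω < t ∧ t ≤ T w 1 ω} := by
      intro t
      have h1 : {ω | T w 0 ω < t ∧ t ≤ T w 1 ω}
          = (T w 0) ⁻¹' {n | n < t} ∩ (T w 1) ⁻¹' {n | t ≤ n} := rfl
      rw [h1]
      exact ((hTmeas w 0) MeasurableSet.of_discrete).inter
        ((hTmeas w 1) MeasurableSet.of_discrete)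
    have hsummand : ∀ t, (fun ω => if T w 0 ω < t ∧ t ≤ T w 1 ω then Y w t ω - Y w (t - 1) ω else 0)
        = Set.indicator {ω | T w 0 ω < t ∧ t ≤ T w 1 ω} (fun ω => Y w t ω - Y w (t - 1) ω) := by
      intro t; ext ω; simp [Set.indicator_apply]
    have hIntSummand : ∀ t ∈ Finset.Icc 1 w,
        Integrable (fun ω => if T w 0 ω < t ∧ t ≤ T w 1 ω then Y w t ω - Y w (t - 1) ω else 0) P := by
      intro t ht
      rw [hsummand t]
      simp only [Finset.mem_Icc] at ht
      exact ((hYint w hwIcc t ht.2).sub (hYint w hwIcc (t - 1) (by omega))).indicator (hBms t)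
    rw [integral_finset_sum _ hIntSummand]
    apply Finset.sum_congr rfl
    intro t ht
    simp only [Finset.mem_Icc] at ht
    rw [hsummand t, integral_indicator (hBms t)]
    by_cases hP : P {ω | T w 0 ω < t ∧ t ≤ T w 1 ω} = 0
    · rw [Measure.restrict_eq_zero.mpr hP, integral_zero_measure, hP]
      simp
    · rw [setIntegral_eq_cmean P hP]
      congr 1
      have hpos : 0 < P {ω | T w 0 ω < t ∧ t ≤ T w 1 ω} := pos_iff_ne_zero.mpr hP
      exact (hWI w w t ht.1 ht.2 le_rfl hw2 hpos hpos).1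
  -- relevance implies positivity of the first-wave complier probability
  have hT1le1 : ∀ z ≤ 1, ∀ ω, T 1 z ω ≤ 1 := fun z hz ω => hTrange 1 ⟨le_rfl, hwbar⟩ z hz ω
  have hcast : ∀ z ≤ 1, (fun ω => (T 1 z ω : ℝ))
      = Set.indicator {ω | T 1 z ω = 1} (fun _ => (1 : ℝ)) := by
    intro z hz; ext ω
    have h := hT1le1 z hz ω
    rcases Nat.le_one_iff_eq_zero_or_eq_one.mp h with h1 | h1 <;>
      simp [Set.indicator_apply, h1]
  have hintT : ∀ z ≤ 1, Integrable (fun ω => (T 1 z ω : ℝ)) P := by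
    intro z hz; rw [hcast z hz]
    exact (integrable_const (1 : ℝ)).indicator ((hTmeas 1 z) (measurableSet_singleton 1))
  have hind1 : IndepFun (fun ω => (T 1 1 ω : ℝ)) Z P := by
    have hg : Measurable (fun p : ((ℕ → ℝ) × ℕ × ℕ) => ((p.2.1 : ℕ) : ℝ)) :=
      (measurable_of_countable _).comp (measurable_fst.comp measurable_snd)
    exact hIndepComp 1 ⟨le_rfl, hwbar⟩ _ hg
  have hind0 : IndepFun (fun ω => (T 1 0 ω : ℝ)) Z P := by
    have hg : Measurable (fun p : ((ℕ → ℝ) × ℕ × ℕ) => ((p.2.2 : ℕ) : ℝ)) :=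
      (measurable_of_countable _).comp (measurable_snd.comp measurable_snd)
    exact hIndepComp 1 ⟨le_rfl, hwbar⟩ _ hg
  have hR1 : cmean P {ω | Z ω = 1} (fun ω => (T 1 (Z ω) ω : ℝ)) = ∫ ω, (T 1 1 ω : ℝ) ∂P := by
    rw [cmean_congr P hZ1meas (g := fun ω => (T 1 1 ω : ℝ))
      (fun ω hω => by simp only [Set.mem_setOf_eq] at hω; rw [hω])]
    exact cmean_of_indepFun P Z hZmeas (hintT 1 le_rfl) hind1 1 (ne_of_gt hZpos)
  have hR0 : cmean P {ω | Z ω = 0} (fun ω => (T 1 (Z ω) ω : ℝ)) = ∫ ω, (T 1 0 ω : ℝ) ∂P := by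
    rw [cmean_congr P hZ0meas (g := fun ω => (T 1 0 ω : ℝ))
      (fun ω hω => by simp only [Set.mem_setOf_eq] at hω; rw [hω])]
    exact cmean_of_indepFun P Z hZmeas (hintT 0 (by omega)) hind0 0 hZ0pos
  have hI1 : ∫ ω, (T 1 1 ω : ℝ) ∂P = (P {ω | T 1 1 ω = 1}).toReal := by
    rw [hcast 1 le_rfl, integral_indicator_const (1 : ℝ)
      (show MeasurableSet {ω | T 1 1 ω = 1} from (hTmeas 1 1) (measurableSet_singleton 1))]
    simp [measureReal_def]
  have hI0 : ∫ ω, (T 1 0 ω : ℝ) ∂P = (P {ω | T 1 0 ω = 1}).toReal := by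
    rw [hcast 0 (by omega), integral_indicator_const (1 : ℝ)
      (show MeasurableSet {ω | T 1 0 ω = 1} from (hTmeas 1 0) (measurableSet_singleton 1))]
    simp [measureReal_def]
  have hlt : P {ω | T 1 0 ω = 1} < P {ω | T 1 1 ω = 1} := by
    rw [hR0, hR1, hI0, hI1] at hRel
    exact (ENNReal.toReal_lt_toReal (measure_ne_top _ _) (measure_ne_top _ _)).mp hRel
  have hsub : {ω | T 1 1 ω = 1} ⊆ {ω | T 1 0 ω = 1} ∪ {ω | T 1 0 ω < 1 ∧ 1 ≤ T 1 1 ω} := by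
    intro ω h
    simp only [Set.mem_setOf_eq, Set.mem_union] at *
    have h0 := hT1le1 0 (by omega) ω
    omega
  have hB1pos : 0 < P {ω | T 1 0 ω < 1 ∧ 1 ≤ T 1 1 ω} := by
    rw [pos_iff_ne_zero]
    intro hc0
    have hchain : P {ω | T 1 1 ω = 1} ≤ P {ω | T 1 0 ω = 1} := by
      calc P {ω | T 1 1 ω = 1}
          ≤ P ({ω | T 1 0 ω = 1} ∪ {ω | T 1 0 ω < 1 ∧ 1 ≤ T 1 1 ω}) := measure_mono hsub
        _ ≤ P {ω | T 1 0 ω = 1} + P {ω | T 1 0 ω < 1 ∧ 1 ≤ T 1 1 ω} := measure_union_le _ _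
        _ = P {ω | T 1 0 ω = 1} := by rw [hc0, add_zero]
    exact absurd (lt_of_lt_of_le hlt hchain) (lt_irrefl _)
  -- diagonal entries
  have hdiag : ∀ i : Fin wbar, M i i = (P {ω | T 1 0 ω < 1 ∧ 1 ≤ T 1 1 ω}).toReal := by
    intro i
    rw [hM i i, if_pos le_rfl]
    congr 1
    exact congrArg P (hsetEq ((i : ℕ) + 1) (by omega) (by have := i.isLt; omega))
  -- mulVec identity
  have hMul : M.mulVec lv = rho := by
    funext i
    have hiw : (i : ℕ) + 1 ≤ wbar := i.isLt
    rw [hrho i, key ((i : ℕ) + 1) (by omega) hiw]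
    show ∑ j : Fin wbar, M i j * lv j = _
    have hterm : ∀ j : Fin wbar, M i j * lv j
        = (fun s : ℕ => if s ≤ (i : ℕ)
            then (P {ω | T ((i : ℕ) + 1) 0 ω < s + 1 ∧ s + 1 ≤ T ((i : ℕ) + 1) 1 ω}).toReal
              * lam (s + 1)
            else 0) (j : ℕ) := by
      intro j
      rw [hM i j, hlv j]
      by_cases h : (j : ℕ) ≤ (i : ℕ) <;> simp [h]
    rw [Finset.sum_congr rfl (fun j _ => hterm j)]
    rw [Fin.sum_univ_eq_sum_range
      (fun s : ℕ => if s ≤ (i : ℕ)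
        then (P {ω | T ((i : ℕ) + 1) 0 ω < s + 1 ∧ s + 1 ≤ T ((i : ℕ) + 1) 1 ω}).toReal
          * lam (s + 1)
        else 0) wbar]
    rw [← Finset.sum_subset (Finset.range_subset_range.mpr hiw)
      (fun s _ hs => by rw [if_neg (by simp only [Finset.mem_range] at hs; omega)])]
    rw [sum_Icc_one_eq_sum_range
      (fun t => (P {ω | T ((i : ℕ) + 1) 0 ω < t ∧ t ≤ T ((i : ℕ) + 1) 1 ω}).toReal * lam t)
      ((i : ℕ) + 1)]
    apply Finset.sum_congr rfl
    intro s hs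
    simp only [Finset.mem_range] at hs
    rw [if_pos (by omega)]
  -- invertibility
  have hdet : IsUnit M.det := by
    have htri : M.BlockTriangular OrderDual.toDual := by
      intro a b hab
      have hab' : (a : ℕ) < (b : ℕ) := hab
      rw [hM a b, if_neg (by omega)]
    rw [Matrix.det_of_lowerTriangular M htri]
    have hposR : 0 < (P {ω | T 1 0 ω < 1 ∧ 1 ≤ T 1 1 ω}).toReal :=
      ENNReal.toReal_pos (ne_of_gt hB1pos) (measure_ne_top _ _)
    rw [Finset.prod_congr rfl (fun i _ => hdiag i), Finset.prod_const]
    exact isUnit_iff_ne_zero.mpr (pow_ne_zero _ (ne_of_gt hposR))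
  have hMunit : IsUnit M := (Matrix.isUnit_iff_isUnit_det M).mpr hdet
  have hinv : lv = M⁻¹.mulVec rho := by
    rw [← hMul, Matrix.mulVec_mulVec, Matrix.nonsing_inv_mul M hdet, Matrix.one_mulVec]
  refine ⟨hdiag, hB1pos, hMunit, hMul, hinv, ?_⟩
  intro x hx
  have h2 : M⁻¹.mulVec (M.mulVec x) = M⁻¹.mulVec (M.mulVec lv) := by rw [hx, hMul]
  rwa [Matrix.mulVec_mulVec, Matrix.mulVec_mulVec, Matrix.nonsing_inv_mul M hdet,
    Matrix.one_mulVec, Matrix.one_mulVec] at h2
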